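/- Let 1 ≤ m ≤ n+1, let p₀, …, p_{n+1} be positive integers and r₀, …, r_{n+1} real numbers. Then the following are equivalent: (i) there exist a ≠ 0 and b ∈ ℝ such that for all sufficiently large real t, ∏_{i=0}^{m−1} Γ(p_i t + r_i) = a e^{bt} ∏_{i=m}^{n+1} Γ(p_i t + r_i); (ii) for every x ∈ ℝ, the number of indices i ∈ {0, …, m−1} with p_i x + r_i a nonpositive integer equals the number of indices i ∈ {m, …, n+1} with p_i x + r_i a nonpositive integer. -/

import Mathlib

open Finset Filter Topology Polynomial

namespace GammaAux

attribute [local instance] Classical.propDecidable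

variable {ι : Type*}

noncomputable def pms (p : ι → ℕ) (r : ι → ℝ) (F : Finset ι) : Multiset ℝ :=
  F.val.bind fun i => (Multiset.range (p i)).map fun j : ℕ => (r i + (j : ℝ)) / (p i : ℝ)




lemma card_filter_eq_sum_indicator (φ : ℝ → Prop) (S : Multiset ℝ) :
    Multiset.card (S.filter φ) = (S.map fun a => if φ a then 1 else 0).sum := by
  induction S using Multiset.induction_on with
  | empty => simp
  | cons a S ih =>
    by_cases h : φ a <;> simp [Multiset.filter_cons, h, ih, Nat.add_comm]

lemma count_eq_sum_indicator (S : Multiset ℝ) (y : ℝ) :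
    S.count y = (S.map fun a => if a = y then 1 else 0).sum := by
  induction S using Multiset.induction_on with
  | empty => simp
  | cons a S ih =>
    by_cases h : a = y <;> simp [Multiset.count_cons, h, ih, Nat.add_comm, eq_comm]

lemma shift_split (S : Multiset ℝ) (y : ℝ) :
    Multiset.card (S.filter fun s => ∃ l : ℕ, (-y) + s = -(l : ℝ))
      = S.count y + Multiset.card (S.filter fun s => ∃ l : ℕ, (1 - y) + s = -(l : ℝ)) := by
  rw [card_filter_eq_sum_indicator, card_filter_eq_sum_indicator, count_eq_sum_indicator]
  rw [← Multiset.sum_map_add]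
  apply congrArg
  apply Multiset.map_congr rfl
  intro a _
  by_cases h : a = y
  · rw [if_pos (⟨0, by rw [h]; push_cast; ring⟩ : ∃ l : ℕ, (-y) + a = -(l : ℝ)),
      if_pos h, if_neg]
    rintro ⟨l, hl⟩
    rw [h] at hl
    have h1 : (l : ℝ) = -1 := by linarith
    have h2 : (0:ℝ) ≤ l := Nat.cast_nonneg l
    linarith
  · have hiff : (∃ l : ℕ, (-y) + a = -(l : ℝ)) ↔ (∃ l : ℕ, (1 - y) + a = -(l : ℝ)) := by
      constructor
      · rintro ⟨l, hl⟩
        rcases Nat.eq_zero_or_pos l with h0 | h0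
        · exfalso; apply h; subst h0; push_cast at hl; linarith
        · obtain ⟨l', rfl⟩ := Nat.exists_eq_succ_of_ne_zero h0.ne'
          exact ⟨l', by push_cast at hl ⊢; linarith⟩
      · rintro ⟨l, hl⟩
        exact ⟨l + 1, by push_cast at hl ⊢; linarith⟩
    rw [if_neg h]
    by_cases h1 : ∃ l : ℕ, (-y) + a = -(l : ℝ)
    · rw [if_pos h1, if_pos (hiff.1 h1)]
    · rw [if_neg h1, if_neg (fun h2 => h1 (hiff.2 h2))]

lemma pms_eq_of_counts (SL SR : Multiset ℝ)
    (h : ∀ x : ℝ, Multiset.card (SL.filter fun s => ∃ l : ℕ, x + s = -(l : ℝ))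
      = Multiset.card (SR.filter fun s => ∃ l : ℕ, x + s = -(l : ℝ))) : SL = SR := by
  ext y
  have h1 := h (-y)
  have h2 := h (1 - y)
  rw [shift_split SL y, shift_split SR y] at h1
  omega








lemma card_filter_bind (φ : ℝ → Prop) (s : Multiset ι) (f : ι → Multiset ℝ) :
    Multiset.card ((s.bind f).filter φ)
      = (s.map fun i => Multiset.card ((f i).filter φ)).sum := by
  induction s using Multiset.induction_on with
  | empty => simp
  | cons a s ih => simp [Multiset.cons_bind, Multiset.filter_add, ih]

lemma card_filter_map (φ : ℝ → Prop) (g : ℕ → ℝ) (s : Multiset ℕ) :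
    Multiset.card ((s.map g).filter φ) = Multiset.card (s.filter fun j => φ (g j)) := by
  induction s using Multiset.induction_on with
  | empty => simp
  | cons a s ih =>
    by_cases h : φ (g a) <;>
      simp [Multiset.filter_cons, h, ih]

lemma key_iff (P : ℕ) (hP : 0 < P) (x ρ : ℝ) (j l : ℕ) :
    x + (ρ + (j : ℝ)) / (P : ℝ) = -(l : ℝ) ↔
      (P : ℝ) * x + ρ = -(((j + P * l : ℕ) : ℝ)) := by
  have hP0 : (P : ℝ) ≠ 0 := Nat.cast_ne_zero.2 hP.ne'
  constructor
  · intro hl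
    have h1 := congrArg (fun y : ℝ => y * (P : ℝ)) hl
    simp only [add_mul, div_mul_cancel₀ _ hP0] at h1
    push_cast
    push_cast at h1
    linarith
  · intro hl
    push_cast at hl
    field_simp
    push_cast
    linarith

lemma indicator_lemma (P : ℕ) (hP : 0 < P) (x ρ : ℝ) :
    ((Finset.range P).filter fun j : ℕ => ∃ l : ℕ, x + (ρ + (j : ℝ)) / (P : ℝ) = -(l : ℝ)).card
      = if ∃ k : ℕ, (P : ℝ) * x + ρ = -(k : ℝ) then 1 else 0 := by
  by_cases h : ∃ k : ℕ, (P : ℝ) * x + ρ = -(k : ℝ)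
  · obtain ⟨k, hk⟩ := h
    rw [if_pos ⟨k, hk⟩]
    have heq : (Finset.range P).filter
        (fun j : ℕ => ∃ l : ℕ, x + (ρ + (j : ℝ)) / (P : ℝ) = -(l : ℝ)) = {k % P} := by
      ext j
      simp only [mem_filter, mem_range, mem_singleton]
      constructor
      · rintro ⟨hj, l, hl⟩
        have h2 := (key_iff P hP x ρ j l).1 hl
        rw [hk] at h2
        have h3 : k = j + P * l := by exact_mod_cast neg_injective h2
        rw [h3, Nat.add_mul_mod_self_left, Nat.mod_eq_of_lt hj]
      · intro hj
        subst hj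
        refine ⟨Nat.mod_lt _ hP, k / P, ?_⟩
        rw [key_iff P hP x ρ _ (k / P), Nat.mod_add_div, hk]
    rw [heq, card_singleton]
  · rw [if_neg h]
    rw [card_eq_zero, filter_eq_empty_iff]
    rintro j hj ⟨l, hl⟩
    exact h ⟨j + P * l, (key_iff P hP x ρ j l).1 hl⟩

/-- Main counting lemma: poles of the product at `x` are counted by the offset multiset. -/
lemma count_poles (p : ι → ℕ) (r : ι → ℝ) (hp : ∀ i, 0 < p i) (F : Finset ι) (x : ℝ) :
    Multiset.card ((pms p r F).filter fun s => ∃ l : ℕ, x + s = -(l : ℝ))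
      = (F.filter fun i => ∃ k : ℕ, (p i : ℝ) * x + r i = -(k : ℝ)).card := by
  rw [pms, card_filter_bind]
  rw [Finset.card_filter]
  rw [← Finset.sum_map_val]  -- hope: (F.val.map f).sum = ∑ i in F, f i
  apply Finset.sum_congr rfl
  intro i _
  rw [card_filter_map]
  have h2 : Multiset.card ((Multiset.range (p i)).filter
      fun j : ℕ => ∃ l : ℕ, x + (r i + (j : ℝ)) / (p i : ℝ) = -(l : ℝ))
      = ((Finset.range (p i)).filter
        fun j : ℕ => ∃ l : ℕ, x + (r i + (j : ℝ)) / (p i : ℝ) = -(l : ℝ)).card := rfl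
  rw [h2, indicator_lemma (p i) (hp i) x (r i)]




lemma prod_range_mul_blocks (f : ℕ → ℝ) (P M : ℕ) :
    ∏ j ∈ range (P * M), f j = ∏ l ∈ range M, ∏ j ∈ range P, f (P * l + j) := by
  induction M with
  | zero => simp
  | succ M ih =>
    rw [Nat.mul_succ, Finset.prod_range_add, ih, Finset.prod_range_succ]

lemma block_prod (P : ℕ) (hP : 0 < P) (t ρ : ℝ) (M : ℕ) :
    ∏ j ∈ range (P * M), ((P : ℝ) * t + ρ + (j : ℝ))
      = (P : ℝ) ^ (P * M) *
        ∏ j ∈ range P, ∏ l ∈ range M, (t + (ρ + (j : ℝ)) / (P : ℝ) + (l : ℝ)) := by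
  have hP0 : (P : ℝ) ≠ 0 := Nat.cast_ne_zero.2 hP.ne'
  rw [prod_range_mul_blocks, Finset.prod_comm]
  have hfac : ∀ j ∈ range P, ∀ l ∈ range M,
      ((P : ℝ) * t + ρ + ((P * l + j : ℕ) : ℝ))
        = (P : ℝ) * (t + (ρ + (j : ℝ)) / (P : ℝ) + (l : ℝ)) := by
    intro j _ l _
    push_cast
    field_simp
    ring
  calc ∏ j ∈ range P, ∏ l ∈ range M, ((P : ℝ) * t + ρ + ((P * l + j : ℕ) : ℝ))
      = ∏ j ∈ range P, ∏ l ∈ range M,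
          ((P : ℝ) * (t + (ρ + (j : ℝ)) / (P : ℝ) + (l : ℝ))) := by
        apply Finset.prod_congr rfl
        intro j hj
        exact Finset.prod_congr rfl fun l hl => hfac j hj l hl
    _ = ∏ j ∈ range P, ((P : ℝ) ^ M * ∏ l ∈ range M, (t + (ρ + (j : ℝ)) / (P : ℝ) + (l : ℝ))) := by
        apply Finset.prod_congr rfl
        intro j _
        rw [Finset.prod_mul_distrib, Finset.prod_const, Finset.card_range]
    _ = (P : ℝ) ^ (P * M) *
          ∏ j ∈ range P, ∏ l ∈ range M, (t + (ρ + (j : ℝ)) / (P : ℝ) + (l : ℝ)) := by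
        rw [Finset.prod_mul_distrib, Finset.prod_const, Finset.card_range, ← pow_mul, Nat.mul_comm]

lemma pms_map_prod (p : ι → ℕ) (r : ι → ℝ) (F : Finset ι) (g : ℝ → ℝ) :
    ((pms p r F).map g).prod = ∏ i ∈ F, ∏ j ∈ range (p i), g ((r i + (j : ℝ)) / (p i : ℝ)) := by
  rw [pms, Multiset.map_bind, Multiset.prod_bind]
  rw [Finset.prod_eq_multiset_prod]
  apply congrArg
  apply Multiset.map_congr rfl
  intro i _
  rw [Multiset.map_map]
  rfl

lemma Gamma_shift (s : ℝ) (hs : 0 < s) (k : ℕ) :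
    Real.Gamma (s + k) = Real.Gamma s * ∏ j ∈ range k, (s + (j : ℝ)) := by
  induction k with
  | zero => simp
  | succ k ih =>
    have h1 : s + (k : ℝ) ≠ 0 := by positivity
    have : s + ((k : ℕ) + 1 : ℕ) = (s + k) + 1 := by push_cast; ring
    rw [this, Real.Gamma_add_one h1, ih, Finset.prod_range_succ]
    ring

lemma tendsto_ratio (a b c : ℝ) (hc : 0 < c) :
    Tendsto (fun N : ℕ => (a + c * N) / (b + c * N)) atTop (𝓝 1) := by
  have h0 : Tendsto (fun N : ℕ => (N : ℝ)⁻¹) atTop (𝓝 0) :=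
    tendsto_inv_atTop_nhds_zero_nat
  have h1 : Tendsto (fun N : ℕ => (a * (N : ℝ)⁻¹ + c) / (b * (N : ℝ)⁻¹ + c)) atTop
      (𝓝 ((a * 0 + c) / (b * 0 + c))) := by
    apply Tendsto.div
    · exact (h0.const_mul a).add tendsto_const_nhds
    · exact (h0.const_mul b).add tendsto_const_nhds
    · simp [hc.ne']
  simp only [mul_zero, zero_add] at h1
  rw [div_self hc.ne'] at h1
  apply h1.congr'
  filter_upwards [eventually_ge_atTop 1] with N hN
  have hN0 : (N : ℝ) ≠ 0 := Nat.cast_ne_zero.2 (by omega)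
  have e1 : a * (N : ℝ)⁻¹ + c = (a + c * N) * (N : ℝ)⁻¹ := by field_simp
  have e2 : b * (N : ℝ)⁻¹ + c = (b + c * N) * (N : ℝ)⁻¹ := by field_simp
  rw [e1, e2, mul_div_mul_right _ _ (inv_ne_zero hN0)]






section Backward

variable (p : ι → ℕ) (r : ι → ℝ)

/-- numerator of GammaSeq at `p i * N` -/
noncomputable def nm (t : ℝ) (i : ι) (N : ℕ) : ℝ :=
  ((p i * N : ℕ) : ℝ) ^ ((p i : ℝ) * t + r i) * (Nat.factorial (p i * N))

noncomputable def tl (t : ℝ) (i : ι) (N : ℕ) : ℝ :=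
  ∏ j ∈ range (p i - 1), ((p i : ℝ) * t + r i + ((p i * N + 1 + j : ℕ) : ℝ))

noncomputable def fl (t : ℝ) (i : ι) (N : ℕ) : ℝ :=
  ∏ j ∈ range (p i * (N + 1)), ((p i : ℝ) * t + r i + (j : ℝ))

lemma den_tail_full (t : ℝ) (i : ι) (hpi : 0 < p i) (N : ℕ) :
    (∏ j ∈ range (p i * N + 1), ((p i : ℝ) * t + r i + (j : ℝ))) * tl p r t i N
      = fl p r t i N := by
  rw [tl, fl]
  have h : p i * (N + 1) = (p i * N + 1) + (p i - 1) := by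
    rw [Nat.mul_succ]; omega
  rw [h, Finset.prod_range_add (fun j : ℕ => ((p i : ℝ) * t + r i + (j : ℝ)))
    (p i * N + 1) (p i - 1)]

lemma gs_mul_full (t : ℝ) (i : ι) (hpi : 0 < p i) (N : ℕ)
    (ht : tl p r t i N ≠ 0) :
    Real.GammaSeq ((p i : ℝ) * t + r i) (p i * N)
      = nm p r t i N * tl p r t i N / fl p r t i N := by
  have h0 : Real.GammaSeq ((p i : ℝ) * t + r i) (p i * N)
      = nm p r t i N / ∏ j ∈ range (p i * N + 1), ((p i : ℝ) * t + r i + (j : ℝ)) := rfl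
  rw [h0, ← den_tail_full p r t i hpi N,
    mul_div_mul_right _ _ ht]

lemma prod_full (t : ℝ) (F : Finset ι) (hp : ∀ i, 0 < p i) (N : ℕ) :
    ∏ i ∈ F, fl p r t i N
      = (∏ i ∈ F, (p i : ℝ) ^ (p i)) ^ (N + 1) *
        ((pms p r F).map fun s => ∏ l ∈ range (N + 1), (t + s + (l : ℝ))).prod := by
  rw [pms_map_prod]
  rw [← Finset.prod_pow]
  rw [← Finset.prod_mul_distrib]
  apply Finset.prod_congr rfl
  intro i _
  rw [fl, block_prod (p i) (hp i) t (r i) (N + 1), ← pow_mul]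

lemma card_pms (F : Finset ι) : Multiset.card (pms p r F) = ∑ i ∈ F, p i := by
  rw [pms, Multiset.card_bind]
  rw [← Finset.sum_map_val]
  apply Finset.sum_congr rfl
  intro i _
  simp

end Backward

section Main

lemma tendsto_tail_ratio (p : ι → ℕ) (r : ι → ℝ) (i : ι) (hpi : 0 < p i) (t₁ t₂ : ℝ) :
    Tendsto (fun N : ℕ => tl p r t₁ i N / tl p r t₂ i N) atTop (𝓝 1) := by
  have h : ∀ N : ℕ, tl p r t₁ i N / tl p r t₂ i N
      = ∏ j ∈ range (p i - 1),
          (((p i : ℝ) * t₁ + r i + 1 + (j : ℝ)) + (p i : ℝ) * (N : ℝ))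
            / (((p i : ℝ) * t₂ + r i + 1 + (j : ℝ)) + (p i : ℝ) * (N : ℝ)) := by
    intro N
    rw [Finset.prod_div_distrib, tl, tl]
    congr 1 <;>
    · apply Finset.prod_congr rfl
      intro j _
      push_cast
      ring
  have h2 : Tendsto (fun N : ℕ => ∏ j ∈ range (p i - 1),
      (((p i : ℝ) * t₁ + r i + 1 + (j : ℝ)) + (p i : ℝ) * (N : ℝ))
        / (((p i : ℝ) * t₂ + r i + 1 + (j : ℝ)) + (p i : ℝ) * (N : ℝ))) atTop
      (𝓝 (∏ _j ∈ range (p i - 1), (1:ℝ))) := by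
    apply tendsto_finset_prod
    intro j _
    exact tendsto_ratio _ _ _ (by exact_mod_cast hpi)
  simp only [Finset.prod_const_one] at h2
  exact (Tendsto.congr (fun N => (h N).symm)) h2

lemma tendsto_pN (P : ℕ) (hP : 0 < P) :
    Tendsto (fun N : ℕ => P * N) atTop atTop :=
  tendsto_atTop_mono (fun N => Nat.le_mul_of_pos_left N hP) tendsto_id

lemma frac_collapse (NL1 NR1 NL2 NR2 AL AR g1 g2 : ℝ) (hAL : AL ≠ 0) (hAR : AR ≠ 0)
    (hg1 : g1 ≠ 0) (hg2 : g2 ≠ 0) (hNL2 : NL2 ≠ 0) (hNR1 : NR1 ≠ 0) :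
    (NL1 / (AL * g1) * (NR2 / (AR * g2))) / ((NR1 / (AR * g1)) * (NL2 / (AL * g2)))
      = (NL1 / NL2) * (NR2 / NR1) := by
  field_simp

theorem backward_dir [DecidableEq ι] (p : ι → ℕ) (r : ι → ℝ) (hp : ∀ i, 0 < p i) (L R : Finset ι)
    (hS : pms p r L = pms p r R)
    (T : ℝ) (hT : ∀ i ∈ L ∪ R, ∀ t : ℝ, T ≤ t → 1 ≤ (p i : ℝ) * t + r i) :
    ∃ a b : ℝ, a ≠ 0 ∧ ∀ t : ℝ, T ≤ t →
      ∏ i ∈ L, Real.Gamma ((p i : ℝ) * t + r i)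
        = a * Real.exp (b * t) * ∏ i ∈ R, Real.Gamma ((p i : ℝ) * t + r i) := by
  classical
  set b : ℝ := (∑ i ∈ L, (p i : ℝ) * Real.log (p i)) - ∑ i ∈ R, (p i : ℝ) * Real.log (p i)
    with hb
  -- sum of p over L equals sum over R
  have hsum : ∑ i ∈ L, p i = ∑ i ∈ R, p i := by
    have h1 := card_pms p r L
    have h2 := card_pms p r R
    rw [hS] at h1
    omega
  -- positivity of Gamma products
  have hΓpos : ∀ (F : Finset ι), F ⊆ L ∪ R → ∀ t : ℝ, T ≤ t →
      0 < ∏ i ∈ F, Real.Gamma ((p i : ℝ) * t + r i) := by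
    intro F hF t ht
    apply Finset.prod_pos
    intro i hi
    exact Real.Gamma_pos_of_pos (lt_of_lt_of_le one_pos (hT i (hF hi) t ht))
  -- the key ratio identity
  have key : ∀ t₁ t₂ : ℝ, T ≤ t₁ → T ≤ t₂ →
      (∏ i ∈ L, Real.Gamma ((p i : ℝ) * t₁ + r i)) *
        (∏ i ∈ R, Real.Gamma ((p i : ℝ) * t₂ + r i))
      = Real.exp (b * (t₁ - t₂)) *
        ((∏ i ∈ R, Real.Gamma ((p i : ℝ) * t₁ + r i)) *
          (∏ i ∈ L, Real.Gamma ((p i : ℝ) * t₂ + r i))) := by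
    intro t₁ t₂ ht₁ ht₂
    -- positivity facts
    have htlpos : ∀ i ∈ L ∪ R, ∀ t : ℝ, T ≤ t → ∀ N : ℕ, 0 < tl p r t i N := by
      intro i hi t ht N
      apply Finset.prod_pos
      intro j _
      have h1 := hT i hi t ht
      have h2 : (0:ℝ) ≤ ((p i * N + 1 + j : ℕ) : ℝ) := Nat.cast_nonneg _
      linarith
    have hdenpos : ∀ i ∈ L ∪ R, ∀ t : ℝ, T ≤ t → ∀ N : ℕ,
        0 < ∏ j ∈ range (p i * N + 1), ((p i : ℝ) * t + r i + (j : ℝ)) := by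
      intro i hi t ht N
      apply Finset.prod_pos
      intro j _
      have h1 := hT i hi t ht
      have h2 : (0:ℝ) ≤ (j : ℝ) := Nat.cast_nonneg _
      linarith
    have hflpos : ∀ i ∈ L ∪ R, ∀ t : ℝ, T ≤ t → ∀ N : ℕ, 0 < fl p r t i N := by
      intro i hi t ht N
      rw [← den_tail_full p r t i (hp i) N]
      exact mul_pos (hdenpos i hi t ht N) (htlpos i hi t ht N)
    have hnmpos : ∀ i : ι, ∀ t : ℝ, ∀ N : ℕ, 1 ≤ N → 0 < nm p r t i N := by
      intro i t N hN
      apply mul_pos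
      · apply Real.rpow_pos_of_pos
        exact_mod_cast Nat.mul_pos (hp i) hN
      · exact_mod_cast Nat.factorial_pos _
    have hGS : ∀ i ∈ L ∪ R, ∀ t : ℝ, T ≤ t → ∀ N : ℕ,
        Real.GammaSeq ((p i : ℝ) * t + r i) (p i * N)
          = nm p r t i N * tl p r t i N / fl p r t i N := fun i hi t ht N =>
      gs_mul_full p r t i (hp i) N (htlpos i hi t ht N).ne'
    -- closed form for the product of GammaSeq over a sub-finset
    have hF : ∀ (F : Finset ι), F ⊆ L ∪ R → ∀ t : ℝ, T ≤ t → ∀ N : ℕ,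
        (∏ i ∈ F, Real.GammaSeq ((p i : ℝ) * t + r i) (p i * N))
          = (∏ i ∈ F, (nm p r t i N * tl p r t i N)) /
            ((∏ i ∈ F, (p i : ℝ) ^ (p i)) ^ (N + 1) *
              ((pms p r F).map fun s => ∏ l ∈ range (N + 1), (t + s + (l : ℝ))).prod) := by
      intro F hFs t ht N
      rw [← prod_full p r t F hp N, ← Finset.prod_div_distrib]
      exact Finset.prod_congr rfl fun i hi => hGS i (hFs hi) t ht N
    have hALpos : (0:ℝ) < ∏ i ∈ L, (p i : ℝ) ^ (p i) :=
      Finset.prod_pos fun i _ => pow_pos (by exact_mod_cast hp i) _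
    have hARpos : (0:ℝ) < ∏ i ∈ R, (p i : ℝ) ^ (p i) :=
      Finset.prod_pos fun i _ => pow_pos (by exact_mod_cast hp i) _
    have hGpos : ∀ t : ℝ, T ≤ t → ∀ N : ℕ,
        0 < ((pms p r L).map fun s => ∏ l ∈ range (N + 1), (t + s + (l : ℝ))).prod := by
      intro t ht N
      have h1 : (0:ℝ) < ∏ i ∈ L, fl p r t i N :=
        Finset.prod_pos fun i hi => hflpos i (Finset.subset_union_left hi) t ht N
      rw [prod_full p r t L hp N] at h1
      by_contra hG
      push_neg at hG
      nlinarith [pow_pos hALpos (N + 1)]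
    -- the ratio of numerators is an exponential
    have hnmr : ∀ i : ι, ∀ N : ℕ, 1 ≤ N → ∀ u v : ℝ,
        nm p r u i N / nm p r v i N
          = Real.exp ((p i : ℝ) * (u - v) * Real.log ((p i : ℝ) * (N : ℝ))) := by
      intro i N hN u v
      have hx : (0:ℝ) < ((p i * N : ℕ) : ℝ) := by exact_mod_cast Nat.mul_pos (hp i) hN
      have hc : (0:ℝ) < ((Nat.factorial (p i * N) : ℕ) : ℝ) := by
        exact_mod_cast Nat.factorial_pos _
      rw [nm, nm, mul_div_mul_right _ _ hc.ne', ← Real.rpow_sub hx]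
      have he : ((p i : ℝ) * u + r i) - ((p i : ℝ) * v + r i) = (p i : ℝ) * (u - v) := by ring
      rw [he, Real.rpow_def_of_pos hx]
      have hxx : ((p i * N : ℕ) : ℝ) = (p i : ℝ) * (N : ℝ) := by push_cast; ring
      rw [hxx, mul_comm (Real.log ((p i : ℝ) * (N : ℝ)))]
    -- the exponent sums give b
    have hexp : ∀ N : ℕ, 1 ≤ N →
        (∑ i ∈ L, (p i : ℝ) * (t₁ - t₂) * Real.log ((p i : ℝ) * (N : ℝ)))
          - (∑ i ∈ R, (p i : ℝ) * (t₁ - t₂) * Real.log ((p i : ℝ) * (N : ℝ)))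
          = b * (t₁ - t₂) := by
      intro N hN
      have hNne : (N : ℝ) ≠ 0 := Nat.cast_ne_zero.2 (by omega)
      have hlog : ∀ i : ι, Real.log ((p i : ℝ) * (N : ℝ))
          = Real.log (p i) + Real.log N := fun i =>
        Real.log_mul (Nat.cast_ne_zero.2 (hp i).ne') hNne
      have hsplit : ∀ F : Finset ι,
          ∑ i ∈ F, (p i : ℝ) * (t₁ - t₂) * Real.log ((p i : ℝ) * (N : ℝ))
            = (t₁ - t₂) * (∑ i ∈ F, (p i : ℝ) * Real.log (p i))
              + (t₁ - t₂) * Real.log N * (∑ i ∈ F, (p i : ℝ)) := by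
        intro F
        rw [Finset.mul_sum, Finset.mul_sum, ← Finset.sum_add_distrib]
        apply Finset.sum_congr rfl
        intro i _
        rw [hlog i]
        ring
      rw [hsplit L, hsplit R]
      have hc : (∑ i ∈ L, (p i : ℝ)) = (∑ i ∈ R, (p i : ℝ)) := by
        rw [← Nat.cast_sum, ← Nat.cast_sum, hsum]
      rw [hc, hb]
      ring
    -- the eventual closed form of the double ratio
    have hPhieq : ∀ N : ℕ, 1 ≤ N →
        ((∏ i ∈ L, Real.GammaSeq ((p i : ℝ) * t₁ + r i) (p i * N)) *
            ∏ i ∈ R, Real.GammaSeq ((p i : ℝ) * t₂ + r i) (p i * N)) /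
          ((∏ i ∈ R, Real.GammaSeq ((p i : ℝ) * t₁ + r i) (p i * N)) *
            ∏ i ∈ L, Real.GammaSeq ((p i : ℝ) * t₂ + r i) (p i * N))
        = Real.exp (b * (t₁ - t₂)) *
            ((∏ i ∈ L, (tl p r t₁ i N / tl p r t₂ i N)) *
              ∏ i ∈ R, (tl p r t₂ i N / tl p r t₁ i N)) := by
      intro N hN
      rw [hF L Finset.subset_union_left t₁ ht₁ N,
          hF R Finset.subset_union_right t₁ ht₁ N,
          hF L Finset.subset_union_left t₂ ht₂ N,
          hF R Finset.subset_union_right t₂ ht₂ N, ← hS]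
      have hg1 : ((pms p r L).map fun s => ∏ l ∈ range (N + 1), (t₁ + s + (l : ℝ))).prod ≠ 0 :=
        (hGpos t₁ ht₁ N).ne'
      have hg2 : ((pms p r L).map fun s => ∏ l ∈ range (N + 1), (t₂ + s + (l : ℝ))).prod ≠ 0 :=
        (hGpos t₂ ht₂ N).ne'
      have hNL2 : (0:ℝ) < ∏ i ∈ L, (nm p r t₂ i N * tl p r t₂ i N) :=
        Finset.prod_pos fun i hi => mul_pos (hnmpos i t₂ N hN)
          (htlpos i (Finset.subset_union_left hi) t₂ ht₂ N)
      have hNR1 : (0:ℝ) < ∏ i ∈ R, (nm p r t₁ i N * tl p r t₁ i N) :=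
        Finset.prod_pos fun i hi => mul_pos (hnmpos i t₁ N hN)
          (htlpos i (Finset.subset_union_right hi) t₁ ht₁ N)
      rw [frac_collapse _ _ _ _ _ _ _ _
        (pow_ne_zero _ hALpos.ne') (pow_ne_zero _ hARpos.ne') hg1 hg2 hNL2.ne' hNR1.ne']
      have h3 : (∏ i ∈ L, (nm p r t₁ i N * tl p r t₁ i N)) /
          (∏ i ∈ L, (nm p r t₂ i N * tl p r t₂ i N))
          = Real.exp (∑ i ∈ L, (p i : ℝ) * (t₁ - t₂) * Real.log ((p i : ℝ) * (N : ℝ))) *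
            ∏ i ∈ L, (tl p r t₁ i N / tl p r t₂ i N) := by
        rw [← Finset.prod_div_distrib]
        rw [Finset.prod_congr rfl fun i (_ : i ∈ L) =>
          mul_div_mul_comm (nm p r t₁ i N) (tl p r t₁ i N) (nm p r t₂ i N) (tl p r t₂ i N)]
        rw [Finset.prod_mul_distrib]
        congr 1
        rw [Finset.prod_congr rfl fun i (_ : i ∈ L) => hnmr i N hN t₁ t₂, ← Real.exp_sum]
      have h4 : (∏ i ∈ R, (nm p r t₂ i N * tl p r t₂ i N)) /
          (∏ i ∈ R, (nm p r t₁ i N * tl p r t₁ i N))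
          = Real.exp (∑ i ∈ R, (p i : ℝ) * (t₂ - t₁) * Real.log ((p i : ℝ) * (N : ℝ))) *
            ∏ i ∈ R, (tl p r t₂ i N / tl p r t₁ i N) := by
        rw [← Finset.prod_div_distrib]
        rw [Finset.prod_congr rfl fun i (_ : i ∈ R) =>
          mul_div_mul_comm (nm p r t₂ i N) (tl p r t₂ i N) (nm p r t₁ i N) (tl p r t₁ i N)]
        rw [Finset.prod_mul_distrib]
        congr 1
        rw [Finset.prod_congr rfl fun i (_ : i ∈ R) => hnmr i N hN t₂ t₁, ← Real.exp_sum]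
      rw [h3, h4]
      have h5 : ∑ i ∈ R, (p i : ℝ) * (t₂ - t₁) * Real.log ((p i : ℝ) * (N : ℝ))
          = - ∑ i ∈ R, (p i : ℝ) * (t₁ - t₂) * Real.log ((p i : ℝ) * (N : ℝ)) := by
        rw [← Finset.sum_neg_distrib]
        exact Finset.sum_congr rfl fun i _ => by ring
      have h6 : Real.exp (∑ i ∈ L, (p i : ℝ) * (t₁ - t₂) * Real.log ((p i : ℝ) * (N : ℝ))) *
          Real.exp (- ∑ i ∈ R, (p i : ℝ) * (t₁ - t₂) * Real.log ((p i : ℝ) * (N : ℝ)))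
          = Real.exp (b * (t₁ - t₂)) := by
        rw [← Real.exp_add, ← hexp N hN]
        exact congrArg Real.exp (sub_eq_add_neg _ _).symm
      rw [h5]
      calc Real.exp (∑ i ∈ L, (p i : ℝ) * (t₁ - t₂) * Real.log ((p i : ℝ) * (N : ℝ))) *
            (∏ i ∈ L, (tl p r t₁ i N / tl p r t₂ i N)) *
            (Real.exp (- ∑ i ∈ R, (p i : ℝ) * (t₁ - t₂) * Real.log ((p i : ℝ) * (N : ℝ))) *
              ∏ i ∈ R, (tl p r t₂ i N / tl p r t₁ i N))
          = (Real.exp (∑ i ∈ L, (p i : ℝ) * (t₁ - t₂) * Real.log ((p i : ℝ) * (N : ℝ))) *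
              Real.exp (- ∑ i ∈ R, (p i : ℝ) * (t₁ - t₂) * Real.log ((p i : ℝ) * (N : ℝ)))) *
              ((∏ i ∈ L, (tl p r t₁ i N / tl p r t₂ i N)) *
                ∏ i ∈ R, (tl p r t₂ i N / tl p r t₁ i N)) := by ring
        _ = Real.exp (b * (t₁ - t₂)) *
              ((∏ i ∈ L, (tl p r t₁ i N / tl p r t₂ i N)) *
                ∏ i ∈ R, (tl p r t₂ i N / tl p r t₁ i N)) := by rw [h6]
    -- limits
    have hGSlim : ∀ (F : Finset ι) (t : ℝ), Tendsto (fun N : ℕ =>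
        ∏ i ∈ F, Real.GammaSeq ((p i : ℝ) * t + r i) (p i * N)) atTop
        (𝓝 (∏ i ∈ F, Real.Gamma ((p i : ℝ) * t + r i))) := by
      intro F t
      apply tendsto_finset_prod
      intro i _
      exact (Real.GammaSeq_tendsto_Gamma _).comp (tendsto_pN (p i) (hp i))
    have hne : (∏ i ∈ R, Real.Gamma ((p i : ℝ) * t₁ + r i)) *
        (∏ i ∈ L, Real.Gamma ((p i : ℝ) * t₂ + r i)) ≠ 0 :=
      (mul_pos (hΓpos R Finset.subset_union_right t₁ ht₁)
        (hΓpos L Finset.subset_union_left t₂ ht₂)).ne'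
    have hlim1 : Tendsto (fun N : ℕ =>
        ((∏ i ∈ L, Real.GammaSeq ((p i : ℝ) * t₁ + r i) (p i * N)) *
            ∏ i ∈ R, Real.GammaSeq ((p i : ℝ) * t₂ + r i) (p i * N)) /
          ((∏ i ∈ R, Real.GammaSeq ((p i : ℝ) * t₁ + r i) (p i * N)) *
            ∏ i ∈ L, Real.GammaSeq ((p i : ℝ) * t₂ + r i) (p i * N))) atTop
        (𝓝 (((∏ i ∈ L, Real.Gamma ((p i : ℝ) * t₁ + r i)) *
            ∏ i ∈ R, Real.Gamma ((p i : ℝ) * t₂ + r i)) /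
          ((∏ i ∈ R, Real.Gamma ((p i : ℝ) * t₁ + r i)) *
            ∏ i ∈ L, Real.Gamma ((p i : ℝ) * t₂ + r i)))) :=
      Tendsto.div ((hGSlim L t₁).mul (hGSlim R t₂)) ((hGSlim R t₁).mul (hGSlim L t₂)) hne
    have hTL : Tendsto (fun N : ℕ => ∏ i ∈ L, (tl p r t₁ i N / tl p r t₂ i N)) atTop (𝓝 1) := by
      simpa using tendsto_finset_prod L fun i (_ : i ∈ L) => tendsto_tail_ratio p r i (hp i) t₁ t₂
    have hTR : Tendsto (fun N : ℕ => ∏ i ∈ R, (tl p r t₂ i N / tl p r t₁ i N)) atTop (𝓝 1) := by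
      simpa using tendsto_finset_prod R fun i (_ : i ∈ R) => tendsto_tail_ratio p r i (hp i) t₂ t₁
    have hlim2 : Tendsto (fun N : ℕ =>
        ((∏ i ∈ L, Real.GammaSeq ((p i : ℝ) * t₁ + r i) (p i * N)) *
            ∏ i ∈ R, Real.GammaSeq ((p i : ℝ) * t₂ + r i) (p i * N)) /
          ((∏ i ∈ R, Real.GammaSeq ((p i : ℝ) * t₁ + r i) (p i * N)) *
            ∏ i ∈ L, Real.GammaSeq ((p i : ℝ) * t₂ + r i) (p i * N))) atTop
        (𝓝 (Real.exp (b * (t₁ - t₂)) * (1 * 1))) := by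
      refine Filter.Tendsto.congr' ?_ (tendsto_const_nhds.mul (hTL.mul hTR))
      filter_upwards [eventually_ge_atTop 1] with N hN
      exact (hPhieq N hN).symm
    rw [mul_one, mul_one] at hlim2
    have huniq := tendsto_nhds_unique hlim1 hlim2
    rw [div_eq_iff hne] at huniq
    exact huniq
  -- conclude
  refine ⟨(∏ i ∈ L, Real.Gamma ((p i : ℝ) * T + r i)) /
      ((∏ i ∈ R, Real.Gamma ((p i : ℝ) * T + r i)) * Real.exp (b * T)), b, ?_, ?_⟩
  · apply div_ne_zero (hΓpos L Finset.subset_union_left T le_rfl).ne'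
    exact (mul_pos (hΓpos R Finset.subset_union_right T le_rfl) (Real.exp_pos _)).ne'
  · intro t ht
    have hk := key t T ht le_rfl
    have hRT := (hΓpos R Finset.subset_union_right T le_rfl).ne'
    have hRt := (hΓpos R Finset.subset_union_right t ht).ne'
    rw [div_mul_eq_mul_div, div_mul_eq_mul_div,
      eq_div_iff (mul_ne_zero hRT (Real.exp_ne_zero _))]
    have he : Real.exp (b * t) = Real.exp (b * (t - T)) * Real.exp (b * T) := by
      rw [← Real.exp_add]; congr 1; ring
    rw [he]
    linear_combination Real.exp (b * T) * hk

end Main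







lemma prod_lin (p : ι → ℕ) (r : ι → ℝ) (hp : ∀ i, 0 < p i) (F : Finset ι) (t : ℝ) :
    ∏ i ∈ F, ∏ j ∈ range (p i), ((p i : ℝ) * t + r i + (j : ℝ))
      = (∏ i ∈ F, (p i : ℝ) ^ (p i)) * ((pms p r F).map fun s => t + s).prod := by
  have h := prod_full p r t F hp 0
  simp only [zero_add, pow_one] at h
  have h1 : ∀ i ∈ F, fl p r t i 0 = ∏ j ∈ range (p i), ((p i : ℝ) * t + r i + (j : ℝ)) := by
    intro i _
    rw [fl, Nat.mul_one]
  rw [Finset.prod_congr rfl h1] at h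
  rw [h]
  congr 1
  apply congrArg
  apply Multiset.map_congr rfl
  intro s _
  rw [Finset.prod_range_one]
  norm_num

theorem forward_dir [DecidableEq ι] (p : ι → ℕ) (r : ι → ℝ) (hp : ∀ i, 0 < p i)
    (L R : Finset ι) (T : ℝ)
    (hT : ∀ i ∈ L ∪ R, ∀ t : ℝ, T ≤ t → 1 ≤ (p i : ℝ) * t + r i)
    (a b : ℝ) (ha : a ≠ 0)
    (hid : ∀ t : ℝ, T ≤ t →
      ∏ i ∈ L, Real.Gamma ((p i : ℝ) * t + r i)
        = a * Real.exp (b * t) * ∏ i ∈ R, Real.Gamma ((p i : ℝ) * t + r i)) :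
    pms p r L = pms p r R := by
  -- step 1: polynomial identity on a ray
  have hstep : ∀ t : ℝ, T ≤ t →
      ∏ i ∈ L, ∏ j ∈ range (p i), ((p i : ℝ) * t + r i + (j : ℝ))
        = Real.exp b * ∏ i ∈ R, ∏ j ∈ range (p i), ((p i : ℝ) * t + r i + (j : ℝ)) := by
    intro t ht
    have hshift : ∀ (F : Finset ι), F ⊆ L ∪ R →
        ∏ i ∈ F, Real.Gamma ((p i : ℝ) * (t + 1) + r i)
          = (∏ i ∈ F, Real.Gamma ((p i : ℝ) * t + r i)) *
            ∏ i ∈ F, ∏ j ∈ range (p i), ((p i : ℝ) * t + r i + (j : ℝ)) := by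
      intro F hF
      rw [← Finset.prod_mul_distrib]
      apply Finset.prod_congr rfl
      intro i hi
      have h1 : (p i : ℝ) * (t + 1) + r i = ((p i : ℝ) * t + r i) + ((p i : ℕ) : ℝ) := by
        push_cast; ring
      rw [h1, Gamma_shift _ (lt_of_lt_of_le one_pos (hT i (hF hi) t ht)) (p i)]
    have hRpos : (0:ℝ) < ∏ i ∈ R, Real.Gamma ((p i : ℝ) * t + r i) :=
      Finset.prod_pos fun i hi =>
        Real.Gamma_pos_of_pos (lt_of_lt_of_le one_pos (hT i (Finset.subset_union_right hi) t ht))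
    have h2 := hid (t + 1) (by linarith)
    rw [hshift L Finset.subset_union_left, hshift R Finset.subset_union_right,
      hid t ht] at h2
    -- h2 : a e^{bt} ΠR · PL = a e^{b(t+1)} (ΠR · PR)
    have h3 : Real.exp (b * (t + 1)) = Real.exp (b * t) * Real.exp b := by
      rw [← Real.exp_add]; congr 1; ring
    rw [h3] at h2
    have hcancel : a * Real.exp (b * t) * ∏ i ∈ R, Real.Gamma ((p i : ℝ) * t + r i) ≠ 0 :=
      mul_ne_zero (mul_ne_zero ha (Real.exp_ne_zero _)) hRpos.ne'
    exact mul_left_cancel₀ hcancel (by linear_combination h2)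
  -- step 2: pass to polynomials
  have hALne : (∏ i ∈ L, (p i : ℝ) ^ (p i)) ≠ 0 :=
    (Finset.prod_pos fun i _ => pow_pos (by exact_mod_cast hp i) _).ne'
  have hARne : (∏ i ∈ R, (p i : ℝ) ^ (p i)) ≠ 0 :=
    (Finset.prod_pos fun i _ => pow_pos (by exact_mod_cast hp i) _).ne'
  have heval : ∀ (F : Finset ι) (A : ℝ) (t : ℝ),
      Polynomial.eval t (C A * ((pms p r F).map fun s => X + C s).prod)
        = A * ((pms p r F).map fun s => t + s).prod := by
    intro F A t
    rw [eval_mul, eval_C, Polynomial.eval_multiset_prod, Multiset.map_map]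
    congr 2
    apply Multiset.map_congr rfl
    intro s _
    simp
  have hinf : C (∏ i ∈ L, (p i : ℝ) ^ (p i)) * ((pms p r L).map fun s => X + C s).prod
      = C (Real.exp b) * (C (∏ i ∈ R, (p i : ℝ) ^ (p i)) *
        ((pms p r R).map fun s => X + C s).prod) := by
    apply Polynomial.eq_of_infinite_eval_eq
    apply Set.Infinite.mono (s := Set.Ici T) ?_ (Set.Ici_infinite T)
    intro t ht
    simp only [Set.mem_setOf_eq]
    have h1 := hstep t (by exact ht)
    rw [prod_lin p r hp L t, prod_lin p r hp R t] at h1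
    rw [heval, eval_mul, eval_C, heval, h1]
  have hroots : ∀ (F : Finset ι) (A : ℝ), A ≠ 0 →
      (C A * ((pms p r F).map fun s => X + C s).prod).roots
        = (pms p r F).map (fun s => -s) := by
    intro F A hA
    rw [Polynomial.roots_C_mul _ hA]
    have h2 : (pms p r F).map (fun s => X + C s)
        = ((pms p r F).map (fun s => -s)).map (fun a => X - C a) := by
      rw [Multiset.map_map]
      apply Multiset.map_congr rfl
      intro s _
      simp [sub_neg_eq_add]
    rw [h2, Polynomial.roots_multiset_prod_X_sub_C]
  have hr : (pms p r L).map (fun s => -s) = (pms p r R).map (fun s => -s) := by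
    calc (pms p r L).map (fun s => -s)
        = (C (∏ i ∈ L, (p i : ℝ) ^ (p i)) *
            ((pms p r L).map fun s => X + C s).prod).roots := (hroots L _ hALne).symm
      _ = (C (Real.exp b) * (C (∏ i ∈ R, (p i : ℝ) ^ (p i)) *
            ((pms p r R).map fun s => X + C s).prod)).roots := by rw [hinf]
      _ = (C (Real.exp b * ∏ i ∈ R, (p i : ℝ) ^ (p i)) *
            ((pms p r R).map fun s => X + C s).prod).roots := by rw [C_mul, mul_assoc]
      _ = (pms p r R).map (fun s => -s) :=
            hroots R _ (mul_ne_zero (Real.exp_ne_zero _) hARne)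
  have : ((pms p r L).map Neg.neg) = ((pms p r R).map Neg.neg) := hr
  exact Multiset.map_injective neg_injective this


end GammaAux

open Finset GammaAux

/-- Remark 5.8.1: the Gamma-function identity (gam) of Theorem 5.8.1 holds
iff the multisets of poles of the two products of Gamma factors coincide. -/
theorem gamma_identity_iff_pole_matching (n m : ℕ) (hm : 1 ≤ m) (hm' : m ≤ n + 1)
    (p : Fin (n + 2) → ℕ) (hp : ∀ i, 0 < p i) (r : Fin (n + 2) → ℝ) :
    (∃ a b : ℝ, a ≠ 0 ∧ ∃ T : ℝ, ∀ t : ℝ, T ≤ t →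
      ∏ i ∈ Finset.univ.filter (fun i : Fin (n + 2) => (i : ℕ) < m),
          Real.Gamma ((p i : ℝ) * t + r i)
        = a * Real.exp (b * t) *
          ∏ i ∈ Finset.univ.filter (fun i : Fin (n + 2) => m ≤ (i : ℕ)),
            Real.Gamma ((p i : ℝ) * t + r i)) ↔
    (∀ x : ℝ,
      Nat.card {i : Fin (n + 2) //
          (i : ℕ) < m ∧ ∃ k : ℕ, (p i : ℝ) * x + r i = -(k : ℝ)}
        = Nat.card {i : Fin (n + 2) //
            m ≤ (i : ℕ) ∧ ∃ k : ℕ, (p i : ℝ) * x + r i = -(k : ℝ)}) := by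
  classical
  set L : Finset (Fin (n + 2)) := Finset.univ.filter (fun i : Fin (n + 2) => (i : ℕ) < m) with hL
  set R : Finset (Fin (n + 2)) := Finset.univ.filter (fun i : Fin (n + 2) => m ≤ (i : ℕ)) with hR
  -- a uniform threshold making all Gamma arguments ≥ 1
  obtain ⟨T, hTdef⟩ : ∃ T : ℝ, ∀ i : Fin (n + 2), (1 - r i) / (p i : ℝ) ≤ T :=
    ⟨Finset.univ.sup' Finset.univ_nonempty (fun i => (1 - r i) / (p i : ℝ)),
      fun i => Finset.le_sup' (fun i => (1 - r i) / (p i : ℝ)) (Finset.mem_univ i)⟩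
  have hT : ∀ i ∈ L ∪ R, ∀ t : ℝ, T ≤ t → 1 ≤ (p i : ℝ) * t + r i := by
    intro i _ t ht
    have hpi : (0:ℝ) < (p i : ℝ) := by exact_mod_cast hp i
    have h1 : (1 - r i) / (p i : ℝ) ≤ t := le_trans (hTdef i) ht
    rw [div_le_iff₀ hpi] at h1
    nlinarith
  -- translation of the Nat.card statement into multiset counting
  have hcardL : ∀ x : ℝ,
      Nat.card {i : Fin (n + 2) //
          (i : ℕ) < m ∧ ∃ k : ℕ, (p i : ℝ) * x + r i = -(k : ℝ)}
        = Multiset.card ((pms p r L).filter fun s => ∃ l : ℕ, x + s = -(l : ℝ)) := by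
    intro x
    rw [count_poles p r hp L x, Nat.card_eq_fintype_card, Fintype.card_subtype, hL,
      Finset.filter_filter]
  have hcardR : ∀ x : ℝ,
      Nat.card {i : Fin (n + 2) //
          m ≤ (i : ℕ) ∧ ∃ k : ℕ, (p i : ℝ) * x + r i = -(k : ℝ)}
        = Multiset.card ((pms p r R).filter fun s => ∃ l : ℕ, x + s = -(l : ℝ)) := by
    intro x
    rw [count_poles p r hp R x, Nat.card_eq_fintype_card, Fintype.card_subtype, hR,
      Finset.filter_filter]
  constructor
  · rintro ⟨a, b, ha, T0, hid⟩ x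
    have hT' : ∀ i ∈ L ∪ R, ∀ t : ℝ, max T T0 ≤ t → 1 ≤ (p i : ℝ) * t + r i :=
      fun i hi t ht => hT i hi t (le_trans (le_max_left _ _) ht)
    have hS : pms p r L = pms p r R :=
      forward_dir p r hp L R (max T T0) hT' a b ha
        (fun t ht => hid t (le_trans (le_max_right _ _) ht))
    rw [hcardL x, hcardR x, hS]
  · intro hcount
    have hS : pms p r L = pms p r R := by
      apply pms_eq_of_counts
      intro x
      rw [← hcardL x, ← hcardR x]
      exact hcount x
    obtain ⟨a, b, ha, hkey⟩ := backward_dir p r hp L R hS T hT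
    exact ⟨a, b, ha, T, hkey⟩
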